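/- For every metric space X with at least two points, ae(X) ≤ 2·(1 − 1/|X|)·(diam X)/(sep X), where sep X is the minimal distance between distinct points (with the conventions a/0 = ∞ and a/∞ = 0). -/

import Mathlib

noncomputable section

/-- The Lipschitz constant of a map (infimum of admissible constants). -/
def lipConst {α β : Type*} [PseudoEMetricSpace α] [PseudoEMetricSpace β] (f : α → β) : NNReal :=
  sInf {K : NNReal | LipschitzWith K f}

/-- The absolute extendability constant `ae(X)`: the least `K ≥ 0` such that for every
metric space `Y` containing `X` (isometrically), every Banach space `E`, and every
Lipschitz map `f : X → E`, the map `f` admits a `K·Lip(f)`-Lipschitz extension to `Y`. -/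
def aeConst (X : Type) [MetricSpace X] : ℝ :=
  sInf {K : ℝ | 0 ≤ K ∧ ∀ (Y : Type) [MetricSpace Y] (ι : X → Y), Isometry ι →
    ∀ (E : Type) [NormedAddCommGroup E] [NormedSpace ℝ E] [CompleteSpace E] (f : X → E),
      (∃ L, LipschitzWith L f) →
      ∃ g : Y → E, (∀ x : X, g (ι x) = f x) ∧ LipschitzWith (K.toNNReal * lipConst f) g}

/-- The non-linear extension modulus `ν(X,Y)` for a subset `X ⊆ Y`: the least `K ≥ 0`
such that every Lipschitz map from `X` into any Banach space admits a `K·Lip(f)`-Lipschitz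
extension to `Y`. -/
def nuMod (Y : Type) [MetricSpace Y] (X : Set Y) : ℝ :=
  sInf {K : ℝ | 0 ≤ K ∧ ∀ (E : Type) [NormedAddCommGroup E] [NormedSpace ℝ E]
    [CompleteSpace E] (f : ↥X → E), (∃ L, LipschitzWith L f) →
    ∃ g : Y → E, (∀ x : ↥X, g ↑x = f x) ∧ LipschitzWith (K.toNNReal * lipConst f) g}

end

open NNReal in
lemma lipConst_spec {α β : Type*} [PseudoMetricSpace α] [PseudoMetricSpace β]
    (f : α → β) (h : ∃ L, LipschitzWith L f) : LipschitzWith (lipConst f) f := by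
  apply LipschitzWith.of_dist_le_mul
  intro x y
  obtain ⟨L, hL⟩ := h
  have hne : ({K : ℝ≥0 | LipschitzWith K f}).Nonempty := ⟨L, hL⟩
  have hcoe : ((lipConst f : ℝ≥0) : ℝ) = sInf ((↑) '' {K : ℝ≥0 | LipschitzWith K f}) :=
    NNReal.coe_sInf _
  rcases eq_or_lt_of_le (dist_nonneg : 0 ≤ dist x y) with hd | hd
  · have h1 : dist (f x) (f y) ≤ L * dist x y := hL.dist_le_mul x y
    rw [← hd] at h1 ⊢
    simpa using le_trans h1 (by simp)
  · have key : dist (f x) (f y) / dist x y ≤ sInf ((↑) '' {K : ℝ≥0 | LipschitzWith K f}) := by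
      apply le_csInf (hne.image _)
      rintro _ ⟨K, hK, rfl⟩
      rw [div_le_iff₀ hd]
      exact hK.dist_le_mul x y
    rw [hcoe]
    calc dist (f x) (f y) = dist (f x) (f y) / dist x y * dist x y := by field_simp
    _ ≤ _ := mul_le_mul_of_nonneg_right key hd.le

set_option maxHeartbeats 1000000 in
open ENNReal in
/-- for every metric space `X` with at least two points,
`ae(X) ≤ 2·(1 − 1/|X|)·(diam X)/(sep X)`, with the conventions `a/0 = ∞`, `a/∞ = 0`
(the inequality is stated in `ℝ≥0∞`). -/
theorem aeConst_le_diam_div_sep (X : Type) [MetricSpace X] (h : ∃ x y : X, x ≠ y) :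
    ENNReal.ofReal (aeConst X) ≤
      2 * (1 - ((ENat.card X : ℝ≥0∞))⁻¹) *
        (EMetric.diam (Set.univ : Set X) / (Set.univ : Set X).einfsep) := by

  classical
  obtain ⟨p₀, p₁, hp⟩ := h
  haveI : Nontrivial X := ⟨p₀, p₁, hp⟩
  set s := (Set.univ : Set X).einfsep with hs_def
  set D := EMetric.diam (Set.univ : Set X) with hD_def
  have hcard : (1 : ℝ≥0∞) < (ENat.card X : ℝ≥0∞) := by
    have h1 : (1:ℕ∞) < ENat.card X := (ENat.one_lt_card_iff_nontrivial X).2 inferInstance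
    exact_mod_cast h1
  have hinv : ((ENat.card X : ℝ≥0∞))⁻¹ < 1 := ENNReal.inv_lt_one.2 hcard
  have hse : s ≤ edist p₀ p₁ :=
    Set.einfsep_le_edist_of_mem (Set.mem_univ _) (Set.mem_univ _) hp
  have hstop : s ≠ ⊤ := (hse.trans_lt (edist_lt_top _ _)).ne
  have hD0 : D ≠ 0 := by
    have h1 : (0:ℝ≥0∞) < edist p₀ p₁ := by simpa using hp
    exact (h1.trans_le (EMetric.edist_le_diam_of_mem (Set.mem_univ _) (Set.mem_univ _))).ne'
  by_cases hbad : s = 0 ∨ D = ⊤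
  · have hds : D / s = ⊤ := by
      rcases hbad with h0 | ht
      · rw [h0]; exact ENNReal.div_zero hD0
      · rw [ht]; exact ENNReal.top_div_of_ne_top hstop
    have hfac : (2 : ℝ≥0∞) * (1 - (ENat.card X : ℝ≥0∞)⁻¹) ≠ 0 := by
      have h2 : (0:ℝ≥0∞) < 1 - (ENat.card X : ℝ≥0∞)⁻¹ := tsub_pos_of_lt hinv
      simp [h2.ne']
    rw [hds, ENNReal.mul_top hfac]
    exact le_top
  push_neg at hbad
  obtain ⟨hs0, hDtop⟩ := hbad
  set s₀ := s.toReal with hs₀_def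
  set D₀ := D.toReal with hD₀_def
  have hs₀ : 0 < s₀ := ENNReal.toReal_pos hs0 hstop
  have hD₀ : 0 < D₀ := ENNReal.toReal_pos hD0 hDtop
  set β : ℝ := (1 - ((ENat.card X : ℝ≥0∞))⁻¹).toReal with hβ_def
  have hβ0 : 0 ≤ β := ENNReal.toReal_nonneg
  set K : ℝ := 2 * β * (D₀ / s₀) with hK_def
  have hK0 : 0 ≤ K := by positivity
  have hsub_ne : (1 - (ENat.card X : ℝ≥0∞)⁻¹) ≠ ⊤ :=
    (tsub_le_self.trans_lt ENNReal.one_lt_top).ne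
  have hdiv_ne : D / s ≠ ⊤ := (ENNReal.div_lt_top hDtop hs0).ne
  have hall_ne : 2 * (1 - (ENat.card X : ℝ≥0∞)⁻¹) * (D / s) ≠ ⊤ :=
    ENNReal.mul_ne_top (ENNReal.mul_ne_top (ENNReal.ofNat_ne_top) hsub_ne) hdiv_ne
  have hRHS : 2 * (1 - (ENat.card X : ℝ≥0∞)⁻¹) * (D / s) = ENNReal.ofReal K := by
    rw [← ENNReal.ofReal_toReal hall_ne]
    congr 1
    rw [ENNReal.toReal_mul, ENNReal.toReal_mul, ENNReal.toReal_div, ENNReal.toReal_ofNat,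
      hK_def, hβ_def, hD₀_def, hs₀_def]
  rw [hRHS]
  apply ENNReal.ofReal_le_ofReal
  -- membership
  apply csInf_le ⟨0, fun a ha => ha.1⟩
  refine ⟨hK0, ?_⟩
  intro Y _ ι hι E _ _ _ f hf
  have hL := lipConst_spec f hf
  set L₀ : ℝ := (lipConst f : ℝ) with hL₀_def
  have hL₀0 : 0 ≤ L₀ := (lipConst f).coe_nonneg
  have hdistD : ∀ a b : X, dist a b ≤ D₀ := by
    intro a b
    rw [dist_edist, hD₀_def]
    exact ENNReal.toReal_mono hDtop
      (EMetric.edist_le_diam_of_mem (Set.mem_univ _) (Set.mem_univ _))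
  have hseps : ∀ a b : X, a ≠ b → s₀ ≤ dist a b := by
    intro a b hab
    rw [dist_edist, hs₀_def]
    exact ENNReal.toReal_mono (edist_ne_top a b)
      (Set.einfsep_le_edist_of_mem (Set.mem_univ _) (Set.mem_univ _) hab)
  have hfd : ∀ a b : X, dist (f a) (f b) ≤ L₀ * D₀ := fun a b =>
    (hL.dist_le_mul a b).trans (mul_le_mul_of_nonneg_left (hdistD a b) hL₀0)
  -- the center point
  obtain ⟨c, hc⟩ : ∃ c : E, ∀ x : X, ‖f x - c‖ ≤ β * (L₀ * D₀) := by
    rcases finite_or_infinite X with hfin | hinf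
    · haveI := Fintype.ofFinite X
      set n := Fintype.card X with hn
      have hn1 : 1 ≤ n := Fintype.card_pos
      have hnn : (n:ℝ) ≠ 0 := by positivity
      have hβn : β = 1 - (n:ℝ)⁻¹ := by
        have hcardn : ((ENat.card X : ℕ∞) : ℝ≥0∞) = (n : ℝ≥0∞) := by
          rw [ENat.card_eq_coe_fintype_card]; simp; rfl
        have hle : ((n : ℝ≥0∞))⁻¹ ≤ 1 := by
          rw [ENNReal.inv_le_one]; exact_mod_cast hn1
        rw [hβ_def, hcardn, ENNReal.toReal_sub_of_le hle ENNReal.one_ne_top,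
          ENNReal.toReal_one, ENNReal.toReal_inv, ENNReal.toReal_natCast]
      refine ⟨(n:ℝ)⁻¹ • ∑ i, f i, fun x => ?_⟩
      have key : f x - (n:ℝ)⁻¹ • ∑ i, f i = (n:ℝ)⁻¹ • ∑ i, (f x - f i) := by
        rw [Finset.sum_sub_distrib, smul_sub, Finset.sum_const, Finset.card_univ, ← hn]
        congr 1
        rw [← Nat.cast_smul_eq_nsmul ℝ, smul_smul, inv_mul_cancel₀ hnn, one_smul]
      have hsum : ∑ i, ‖f x - f i‖ ≤ ((n:ℝ) - 1) * (L₀ * D₀) := by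
        have hb := Finset.sum_le_card_nsmul (Finset.univ.erase x) (fun i => ‖f x - f i‖)
          (L₀ * D₀) (fun i _ => by simpa [dist_eq_norm] using hfd x i)
        have hr : ∑ i ∈ Finset.univ.erase x, ‖f x - f i‖ = ∑ i, ‖f x - f i‖ :=
          Finset.sum_erase _ (by simp)
        have hcarde : (Finset.univ.erase x).card = n - 1 := by
          rw [Finset.card_erase_of_mem (Finset.mem_univ x), Finset.card_univ]
        rw [← hr]
        calc ∑ i ∈ Finset.univ.erase x, ‖f x - f i‖ ≤ (Finset.univ.erase x).card • (L₀ * D₀) := hb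
          _ = ((n:ℝ) - 1) * (L₀ * D₀) := by
              rw [hcarde, nsmul_eq_mul, Nat.cast_sub hn1, Nat.cast_one]
      rw [key, norm_smul, Real.norm_eq_abs, abs_of_nonneg (by positivity : (0:ℝ) ≤ (n:ℝ)⁻¹)]
      calc (n:ℝ)⁻¹ * ‖∑ i, (f x - f i)‖ ≤ (n:ℝ)⁻¹ * (((n:ℝ) - 1) * (L₀ * D₀)) := by
            apply mul_le_mul_of_nonneg_left _ (by positivity)
            exact (norm_sum_le _ _).trans hsum
        _ = β * (L₀ * D₀) := by rw [hβn]; field_simp; try ring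
    · refine ⟨f p₀, fun x => ?_⟩
      have hβ1 : β = 1 := by
        rw [hβ_def, ENat.card_eq_top_of_infinite]; simp
      rw [hβ1, one_mul, ← dist_eq_norm]
      exact hfd x p₀
  set M : ℝ := β * (L₀ * D₀) with hM_def
  have hM0 : 0 ≤ M := by positivity
  -- bump functions
  set φ : X → Y → ℝ := fun x y => max 0 (1 - 2 / s₀ * dist y (ι x)) with hφ_def
  have hφ0 : ∀ x y, 0 ≤ φ x y := fun x y => le_max_left _ _
  have hφlip : ∀ (x : X) (y y' : Y), φ x y - φ x y' ≤ 2 / s₀ * dist y y' := by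
    intro x y y'
    have htri : |dist y' (ι x) - dist y (ι x)| ≤ dist y' y := abs_dist_sub_le y' y (ι x)
    rw [abs_le] at htri
    have h2 : 1 - 2 / s₀ * dist y' (ι x) ≤ φ x y' := le_max_right _ _
    have h3 : (0:ℝ) < 2 / s₀ := by positivity
    have hd : dist y' y = dist y y' := dist_comm _ _
    have h1 : φ x y ≤ φ x y' + 2 / s₀ * dist y y' := by
      apply max_le
      · have : 0 ≤ φ x y' := hφ0 x y'
        nlinarith [dist_nonneg (x := y) (y := y')]
      · nlinarith [htri.1]
    linarith
  have huniq : ∀ (y : Y) (x x' : X), dist y (ι x) < s₀ / 2 → dist y (ι x') < s₀ / 2 → x = x' := by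
    intro y x x' h1 h2
    by_contra hne
    have h3 := hseps x x' hne
    rw [← hι.dist_eq x x'] at h3
    have h4 := dist_triangle (ι x) y (ι x')
    rw [dist_comm (ι x) y] at h4
    linarith
  set g : Y → E := fun y =>
    if hy : ∃ x, dist y (ι x) < s₀ / 2 then c + φ hy.choose y • (f hy.choose - c) else c
    with hg_def
  have hgval : ∀ (y : Y) (x : X), dist y (ι x) < s₀ / 2 → g y = c + φ x y • (f x - c) := by
    intro y x hx
    have hy : ∃ x, dist y (ι x) < s₀ / 2 := ⟨x, hx⟩
    have he : hy.choose = x := huniq y hy.choose x hy.choose_spec hx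
    simp only [hg_def]
    rw [dif_pos hy, he]
  have hgval0 : ∀ y : Y, ¬(∃ x, dist y (ι x) < s₀ / 2) → g y = c := by
    intro y hy
    simp only [hg_def]
    rw [dif_neg hy]
  have hext : ∀ x : X, g (ι x) = f x := by
    intro x
    have hx : dist (ι x) (ι x) < s₀ / 2 := by rw [dist_self]; positivity
    rw [hgval (ι x) x hx]
    have hφ1 : φ x (ι x) = 1 := by
      simp only [hφ_def, dist_self, mul_zero, sub_zero]
      exact max_eq_right zero_le_one
    rw [hφ1, one_smul]
    abel
  refine ⟨g, hext, ?_⟩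
  have hKL : ((K.toNNReal * lipConst f : NNReal) : ℝ) = K * L₀ := by
    rw [NNReal.coe_mul, Real.coe_toNNReal _ hK0, hL₀_def]
  apply LipschitzWith.of_dist_le_mul
  intro y y'
  rw [hKL]
  have hCd : K * L₀ = 2 / s₀ * M := by
    rw [hK_def, hM_def]; field_simp
  rw [hCd]
  -- the "half" lemma : second point outside all balls
  have half : ∀ y y' : Y, ¬(∃ x, dist y' (ι x) < s₀ / 2) →
      dist (g y) (g y') ≤ 2 / s₀ * M * dist y y' := by
    intro y y' hy'
    rw [hgval0 y' hy']
    by_cases hy : ∃ x, dist y (ι x) < s₀ / 2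
    · obtain ⟨x, hx⟩ := hy
      rw [hgval y x hx]
      have h1 : dist (c + φ x y • (f x - c)) c = φ x y * ‖f x - c‖ := by
        rw [dist_eq_norm, add_sub_cancel_left, norm_smul, Real.norm_eq_abs,
          abs_of_nonneg (hφ0 x y)]
      rw [h1]
      have hφy' : φ x y' = 0 := by
        have hdge : ¬ dist y' (ι x) < s₀ / 2 := fun hh => hy' ⟨x, hh⟩
        push_neg at hdge
        have hfs : 2 / s₀ * (s₀ / 2) = 1 := by field_simp
        have hle0 : 1 - 2 / s₀ * dist y' (ι x) ≤ 0 := by nlinarith [hs₀]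
        simp only [hφ_def]
        exact max_eq_left hle0
      have h2 := hφlip x y y'
      rw [hφy', sub_zero] at h2
      calc φ x y * ‖f x - c‖ ≤ (2 / s₀ * dist y y') * M := by
            apply mul_le_mul h2 (hc x) (norm_nonneg _) (by positivity)
        _ = 2 / s₀ * M * dist y y' := by ring
    · rw [hgval0 y hy, dist_self]
      have : (0:ℝ) ≤ 2 / s₀ * M * dist y y' :=
        mul_nonneg (mul_nonneg (by positivity) hM0) dist_nonneg
      linarith
  by_cases hy' : ∃ x, dist y' (ι x) < s₀ / 2
  · by_cases hy : ∃ x, dist y (ι x) < s₀ / 2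
    · obtain ⟨x, hx⟩ := hy
      obtain ⟨x', hx'⟩ := hy'
      rw [hgval y x hx, hgval y' x' hx']
      by_cases hxx : x = x'
      · subst hxx
        have h1 : dist (c + φ x y • (f x - c)) (c + φ x y' • (f x - c))
            = |φ x y - φ x y'| * ‖f x - c‖ := by
          rw [dist_add_left, dist_eq_norm, ← sub_smul, norm_smul, Real.norm_eq_abs]
        rw [h1]
        have h2 : |φ x y - φ x y'| ≤ 2 / s₀ * dist y y' := by
          rw [abs_sub_le_iff]
          refine ⟨hφlip x y y', ?_⟩
          rw [dist_comm]
          exact hφlip x y' y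
        calc |φ x y - φ x y'| * ‖f x - c‖ ≤ (2 / s₀ * dist y y') * M :=
              mul_le_mul h2 (hc x) (norm_nonneg _) (by positivity)
          _ = 2 / s₀ * M * dist y y' := by ring
      · have hfs : 2 / s₀ * (s₀ / 2) = 1 := by field_simp
        have e1 : φ x y = 1 - 2 / s₀ * dist y (ι x) := by
          simp only [hφ_def]
          apply max_eq_right
          nlinarith [dist_nonneg (x := y) (y := ι x), hs₀]
        have e2 : φ x' y' = 1 - 2 / s₀ * dist y' (ι x') := by
          simp only [hφ_def]
          apply max_eq_right
          nlinarith [dist_nonneg (x := y') (y := ι x'), hs₀]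
        have htri : s₀ ≤ dist y (ι x) + dist y y' + dist y' (ι x') := by
          have h5 := hseps x x' hxx
          rw [← hι.dist_eq x x'] at h5
          have h6 := dist_triangle (ι x) y (ι x')
          have h7 := dist_triangle y y' (ι x')
          rw [dist_comm (ι x) y] at h6
          linarith
        have hsum : φ x y + φ x' y' ≤ 2 / s₀ * dist y y' := by
          rw [e1, e2]
          have h8 : (0:ℝ) < 2 / s₀ := by positivity
          have h9 := mul_le_mul_of_nonneg_left htri h8.le
          have h10 : 2 / s₀ * (dist y (ι x) + dist y y' + dist y' (ι x'))
              = 2 / s₀ * dist y (ι x) + 2 / s₀ * dist y y' + 2 / s₀ * dist y' (ι x') := by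
            ring
          have h11 : 2 / s₀ * s₀ = 2 := by field_simp
          linarith
        calc dist (c + φ x y • (f x - c)) (c + φ x' y' • (f x' - c))
            ≤ ‖φ x y • (f x - c)‖ + ‖φ x' y' • (f x' - c)‖ := by
              rw [dist_add_left, dist_eq_norm]
              exact norm_sub_le _ _
          _ = φ x y * ‖f x - c‖ + φ x' y' * ‖f x' - c‖ := by
              rw [norm_smul, norm_smul, Real.norm_eq_abs, Real.norm_eq_abs,
                abs_of_nonneg (hφ0 x y), abs_of_nonneg (hφ0 x' y')]
          _ ≤ φ x y * M + φ x' y' * M := add_le_add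
              (mul_le_mul_of_nonneg_left (hc x) (hφ0 x y))
              (mul_le_mul_of_nonneg_left (hc x') (hφ0 x' y'))
          _ = (φ x y + φ x' y') * M := by ring
          _ ≤ (2 / s₀ * dist y y') * M := mul_le_mul_of_nonneg_right hsum hM0
          _ = 2 / s₀ * M * dist y y' := by ring
    · rw [dist_comm]
      calc dist (g y') (g y) ≤ 2 / s₀ * M * dist y' y := half y' y hy
        _ = 2 / s₀ * M * dist y y' := by rw [dist_comm]
  · exact half y y' hy'
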